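/- Let n ≥ 2 and let I ⊆ K[x_1,…,x_n] be a polymatroidal ideal generated in degree 2 such that every variable x_i divides some minimal generator of I, and assume I is not squarefree. After relabeling the variables, write G(I) = G(J) ∪ {x_1², x_2², …, x_t²}, where J is the ideal generated by the squarefree elements of G(I) and 1 ≤ t ≤ n, and let G be the graph on [n] with J = I(G). Then for every k ≥ 1 the monomial ideal HS_k(I) := HS_k(I(G)) + Σ_{ℓ=1}^{t} x_ℓ²·V_{k,ℓ}, where V_{k,ℓ} is the ideal generated by all squarefree monomials of degree k in the variables {x_j : j ∈ [n], j ≠ ℓ}, is a polymatroidal ideal generated in degree k+2. -/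

import Mathlib

open MvPolynomial

/-- A polynomial is a monomial (with coefficient `1`). -/
def IsMonomialElt {K : Type*} [Field K] {n : ℕ} (p : MvPolynomial (Fin n) K) : Prop :=
  ∃ a : Fin n →₀ ℕ, p = MvPolynomial.monomial a 1
/-- The polymatroidal exchange property for a set `Gens` of monomials (the minimal
monomial generators of an equigenerated monomial ideal): for all `u, v ∈ Gens` and every
`i` with `deg_{x_i}(u) > deg_{x_i}(v)` there is `j` with `deg_{x_j}(u) < deg_{x_j}(v)`
such that `x_j · (u / x_i) ∈ Gens` (equivalently, `x_i · w = x_j · u` for some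
`w ∈ Gens`). -/
def ExchangeProperty {K : Type*} [Field K] {n : ℕ}
    (Gens : Set (MvPolynomial (Fin n) K)) : Prop :=
  ∀ u ∈ Gens, ∀ v ∈ Gens, ∀ i : Fin n,
    MvPolynomial.degreeOf i v < MvPolynomial.degreeOf i u →
      ∃ j : Fin n, MvPolynomial.degreeOf j u < MvPolynomial.degreeOf j v ∧
        ∃ w ∈ Gens, MvPolynomial.X i * w = MvPolynomial.X j * u
/-- A monomial ideal is *polymatroidal*, generated in degree `d`, if its set of minimal
monomial generators (equivalently, any generating set of monomials of degree `d`)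
satisfies the exchange property. -/
def IsPolymatroidal {K : Type*} [Field K] {n : ℕ}
    (I : Ideal (MvPolynomial (Fin n) K)) (d : ℕ) : Prop :=
  ∃ Gens : Set (MvPolynomial (Fin n) K),
    (∀ u ∈ Gens, IsMonomialElt u ∧ u.totalDegree = d) ∧
    Ideal.span Gens = I ∧ ExchangeProperty Gens
/-- The minimal monomial generating set of the edge ideal `I(G)`:  the monomials
`x_i x_j` with `{i,j}` an edge of `G`. -/
def edgeGens (K : Type*) [Field K] {n : ℕ} (G : SimpleGraph (Fin n)) :
    Set (MvPolynomial (Fin n) K) :=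
  {w | ∃ i j : Fin n, G.Adj i j ∧ w = MvPolynomial.X i * MvPolynomial.X j}
/-- The generating monomials of the `k`-th homological shift ideal `HS_k(I(G))`:
all monomials `x_A x_B` with `A, B` nonempty, `max A < min B`, `|A ∪ B| = k + 2` and
`{max A, b} ∈ E(G)` for all `b ∈ B`. -/
def HSgens (K : Type*) [Field K] {n : ℕ} (G : SimpleGraph (Fin n)) (k : ℕ) :
    Set (MvPolynomial (Fin n) K) :=
  {w | ∃ A B : Finset (Fin n), A.Nonempty ∧ B.Nonempty ∧
    (∀ a ∈ A, ∀ b ∈ B, a < b) ∧ (A ∪ B).card = k + 2 ∧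
    (∃ a0 ∈ A, (∀ a ∈ A, a ≤ a0) ∧ ∀ b ∈ B, G.Adj a0 b) ∧
    w = (∏ i ∈ A, MvPolynomial.X i) * ∏ i ∈ B, MvPolynomial.X i}
namespace HSFH
variable {K : Type*} [Field K] {n : ℕ}

noncomputable def ind (S : Finset (Fin n)) : Fin n →₀ ℕ := ∑ x ∈ S, Finsupp.single x 1

lemma ind_apply (S : Finset (Fin n)) (y : Fin n) : ind S y = if y ∈ S then 1 else 0 := by
  classical
  rw [ind, Finset.sum_apply']
  simp [Finsupp.single_apply]

lemma ind_support (S : Finset (Fin n)) : (ind S).support ⊆ S := by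
  intro x hx
  rw [Finsupp.mem_support_iff, ind_apply] at hx
  by_contra h
  rw [if_neg h] at hx
  exact hx rfl

def degsum (c : Fin n →₀ ℕ) : ℕ := c.sum fun _ e => e

lemma degsum_eq (c : Fin n →₀ ℕ) {U : Finset (Fin n)} (h : c.support ⊆ U) :
    degsum c = ∑ x ∈ U, c x :=
  Finsupp.sum_of_support_subset c h _ (fun _ _ => rfl)

lemma degsum_add (c d : Fin n →₀ ℕ) : degsum (c + d) = degsum c + degsum d :=
  Finsupp.sum_add_index' (fun _ => rfl) (fun _ _ _ => rfl)

lemma degsum_single (x : Fin n) (m : ℕ) : degsum (Finsupp.single x m) = m := by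
  simp [degsum, Finsupp.sum_single_index]

lemma degsum_ind (S : Finset (Fin n)) : degsum (ind S) = S.card := by
  rw [degsum_eq _ (ind_support S)]
  rw [Finset.sum_congr rfl (fun x hx => by rw [ind_apply, if_pos hx])]
  simp

lemma prod_X_eq (S : Finset (Fin n)) :
    (∏ x ∈ S, (X x : MvPolynomial (Fin n) K)) = monomial (ind S) 1 := by
  classical
  induction S using Finset.induction with
  | empty => simp [ind]
  | @insert a s ha ih =>
    rw [Finset.prod_insert ha, ih]
    have h : ind (insert a s) = Finsupp.single a 1 + ind s := by
      rw [ind, ind, Finset.sum_insert ha]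
    rw [h, monomial_single_add, pow_one]

lemma mono_inj {a b : Fin n →₀ ℕ} (h : (monomial a (1:K)) = monomial b 1) : a = b :=
  monomial_left_injective one_ne_zero h

lemma deg_mono (c : Fin n →₀ ℕ) (i : Fin n) : degreeOf i (monomial c (1:K)) = c i :=
  degreeOf_monomial_eq c i one_ne_zero

lemma edge_monomial (p q : Fin n) :
    (X p * X q : MvPolynomial (Fin n) K) = monomial (Finsupp.single p 1 + Finsupp.single q 1) 1 := by
  rw [monomial_single_add, pow_one, ← pow_one (X q : MvPolynomial (Fin n) K), X_pow_eq_monomial]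

lemma two_le_of_ne {a b : Fin n} (h : a ≠ b) : 2 ≤ n := by
  by_contra hc
  push_neg at hc
  have ha := a.isLt
  have hb := b.isLt
  exact h (Fin.ext (by omega))

lemma e_at (c : Fin n →₀ ℕ) (i j x : Fin n) :
    ((c + Finsupp.single j 1 - Finsupp.single i 1 : Fin n →₀ ℕ)) x
      = c x + (if j = x then 1 else 0) - (if i = x then 1 else 0) := by
  rw [Finsupp.tsub_apply, Finsupp.add_apply, Finsupp.single_apply, Finsupp.single_apply]

lemma X_mul_mono (i : Fin n) (c : Fin n →₀ ℕ) :
    (X i : MvPolynomial (Fin n) K) * monomial c 1 = monomial (Finsupp.single i 1 + c) 1 := by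
  rw [monomial_single_add, pow_one]

variable {G : SimpleGraph (Fin n)} {t : ℕ}

lemma gens0_form {u : MvPolynomial (Fin n) K}
    (hu : u ∈ edgeGens K G ∪ {w | ∃ ℓ : Fin n, (ℓ : ℕ) < t ∧ w = X ℓ ^ 2}) :
    (∃ p q : Fin n, G.Adj p q ∧ u = monomial (Finsupp.single p 1 + Finsupp.single q 1) 1) ∨
    (∃ ℓ : Fin n, (ℓ : ℕ) < t ∧ u = monomial (Finsupp.single ℓ 2) 1) := by
  rcases hu with ⟨p, q, h, rfl⟩ | ⟨ℓ, h, rfl⟩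
  · exact Or.inl ⟨p, q, h, edge_monomial p q⟩
  · exact Or.inr ⟨ℓ, h, X_pow_eq_monomial⟩

lemma mem_gens0_edge {p q : Fin n} (h : G.Adj p q) :
    (monomial (Finsupp.single p 1 + Finsupp.single q 1) 1 : MvPolynomial (Fin n) K)
      ∈ edgeGens K G ∪ {w | ∃ ℓ : Fin n, (ℓ : ℕ) < t ∧ w = X ℓ ^ 2} :=
  Or.inl ⟨p, q, h, (edge_monomial p q).symm⟩

lemma mem_gens0_sq {ℓ : Fin n} (h : (ℓ : ℕ) < t) :
    (monomial (Finsupp.single ℓ 2) 1 : MvPolynomial (Fin n) K)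
      ∈ edgeGens K G ∪ {w | ∃ ℓ : Fin n, (ℓ : ℕ) < t ∧ w = X ℓ ^ 2} :=
  Or.inr ⟨ℓ, h, X_pow_eq_monomial.symm⟩

/-- From an exchange conclusion against the square `x_v^2`, extract an edge at `v`. -/
lemma final_step {v j : Fin n} (hjv : j ≠ v) {w' : MvPolynomial (Fin n) K}
    (hw' : w' ∈ edgeGens K G ∪ {w | ∃ ℓ : Fin n, (ℓ : ℕ) < t ∧ w = X ℓ ^ 2})
    (heq : X v * w' = X j * (monomial (Finsupp.single v 2) 1 : MvPolynomial (Fin n) K)) :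
    ∃ z, G.Adj v z := by
  rcases gens0_form hw' with ⟨a, b, hab, rfl⟩ | ⟨m, hm, rfl⟩
  · rw [X_mul_mono, X_mul_mono] at heq
    have E := mono_inj heq
    have hE := DFunLike.congr_fun E v
    simp only [Finsupp.add_apply, Finsupp.single_apply, if_true] at hE
    rw [if_neg hjv] at hE
    by_cases hav : a = v
    · exact ⟨b, hav ▸ hab⟩
    by_cases hbv : b = v
    · exact ⟨a, (hbv ▸ hab).symm⟩
    · rw [if_neg hav, if_neg hbv] at hE; omega
  · rw [X_mul_mono, X_mul_mono] at heq
    have E := mono_inj heq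
    have hE := DFunLike.congr_fun E v
    simp only [Finsupp.add_apply, Finsupp.single_apply, if_true] at hE
    rw [if_neg hjv] at hE
    by_cases hmv : m = v
    · rw [if_pos hmv] at hE; omega
    · rw [if_neg hmv] at hE; omega

lemma exists_adj
    (hpoly : ExchangeProperty
      (edgeGens K G ∪ {w | ∃ ℓ : Fin n, (ℓ : ℕ) < t ∧ w = X ℓ ^ 2}))
    (hvar : ∀ v : Fin n, ∃ u ∈
      (edgeGens K G ∪ {w | ∃ ℓ : Fin n, (ℓ : ℕ) < t ∧ w = X ℓ ^ 2}),
      MvPolynomial.X v ∣ u)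
    (hn : 2 ≤ n) (v : Fin n) : ∃ w, G.Adj v w := by
  obtain ⟨u, hu, hdvd⟩ := hvar v
  rcases gens0_form hu with ⟨p, q, hadj, hue⟩ | ⟨ℓ, hℓ, hue⟩
  · subst hue
    rw [X_dvd_monomial] at hdvd
    rcases hdvd with h1 | h1
    · exact absurd h1 one_ne_zero
    by_cases hpv : p = v
    · exact ⟨q, hpv ▸ hadj⟩
    by_cases hqv : q = v
    · exact ⟨p, (hqv ▸ hadj).symm⟩
    · exfalso; apply h1
      rw [Finsupp.add_apply, Finsupp.single_apply, Finsupp.single_apply, if_neg hpv, if_neg hqv]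
      omega
  · subst hue
    rw [X_dvd_monomial] at hdvd
    have hvℓ : v = ℓ := by
      rcases hdvd with h1 | h1
      · exact absurd h1 one_ne_zero
      by_contra hne
      exact h1 (by rw [Finsupp.single_apply, if_neg (fun h => hne h.symm)])
    subst hvℓ
    obtain ⟨v', hv'⟩ := Fintype.exists_ne_of_one_lt_card (by simp only [Fintype.card_fin]; omega) v
    obtain ⟨u', hu', hdvd'⟩ := hvar v'
    rcases gens0_form hu' with ⟨p, q, hadj', hue'⟩ | ⟨m, hm, hue'⟩
    · subst hue'
      by_cases hpv : p = v
      · exact ⟨q, hpv ▸ hadj'⟩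
      by_cases hqv : q = v
      · exact ⟨p, (hqv ▸ hadj').symm⟩
      obtain ⟨j, hdegj, w', hw', heq⟩ := hpoly _ hu _ hu' v (by
        rw [deg_mono, deg_mono, Finsupp.add_apply, Finsupp.single_apply, Finsupp.single_apply,
          Finsupp.single_apply, if_neg hpv, if_neg hqv, if_pos rfl]
        omega)
      rw [deg_mono, deg_mono] at hdegj
      have hjv : j ≠ v := by
        intro h; subst h
        rw [Finsupp.single_apply, if_pos rfl, Finsupp.add_apply, Finsupp.single_apply,
          Finsupp.single_apply, if_neg hpv, if_neg hqv] at hdegj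
        omega
      exact final_step hjv hw' heq
    · subst hue'
      rw [X_dvd_monomial] at hdvd'
      have hmv' : m = v' := by
        rcases hdvd' with h1 | h1
        · exact absurd h1 one_ne_zero
        by_contra hne
        exact h1 (by rw [Finsupp.single_apply, if_neg hne])
      have hmv : m ≠ v := by rw [hmv']; exact hv'
      obtain ⟨j, hdegj, w', hw', heq⟩ := hpoly _ hu _ hu' v (by
        rw [deg_mono, deg_mono, Finsupp.single_apply, Finsupp.single_apply,
          if_neg hmv, if_pos rfl]
        omega)
      rw [deg_mono, deg_mono] at hdegj
      have hjv : j ≠ v := by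
        intro h; subst h
        rw [Finsupp.single_apply, if_pos rfl, Finsupp.single_apply, if_neg hmv] at hdegj
        omega
      exact final_step hjv hw' heq

lemma adj_of_lt
    (hpoly : ExchangeProperty
      (edgeGens K G ∪ {w | ∃ ℓ : Fin n, (ℓ : ℕ) < t ∧ w = X ℓ ^ 2}))
    (hvar : ∀ v : Fin n, ∃ u ∈
      (edgeGens K G ∪ {w | ∃ ℓ : Fin n, (ℓ : ℕ) < t ∧ w = X ℓ ^ 2}),
      MvPolynomial.X v ∣ u)
    {ℓ v : Fin n} (hℓ : (ℓ : ℕ) < t) (hvℓ : v ≠ ℓ) : G.Adj ℓ v := by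
  have hn : 2 ≤ n := two_le_of_ne hvℓ
  obtain ⟨w, hw⟩ := exists_adj hpoly hvar hn v
  by_cases hwℓ : w = ℓ
  · exact (hwℓ ▸ hw).symm
  have hvw : v ≠ w := hw.ne
  obtain ⟨j, hdegj, w', hw', heq⟩ := hpoly _ (mem_gens0_edge hw) _ (mem_gens0_sq hℓ) w (by
    rw [deg_mono, deg_mono, Finsupp.single_apply, Finsupp.add_apply, Finsupp.single_apply,
      Finsupp.single_apply, if_neg (fun h : ℓ = w => hwℓ h.symm), if_neg hvw, if_pos rfl]
    omega)
  rw [deg_mono, deg_mono] at hdegj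
  have hjℓ : j = ℓ := by
    by_contra hc
    rw [Finsupp.single_apply, if_neg (fun h : ℓ = j => hc h.symm)] at hdegj
    omega
  have hjℓ' : ℓ = j := hjℓ.symm
  subst hjℓ'
  rcases gens0_form hw' with ⟨a, b, hab, rfl⟩ | ⟨m, hm, rfl⟩
  · rw [X_mul_mono, X_mul_mono] at heq
    have E := mono_inj heq
    have hEl := DFunLike.congr_fun E ℓ
    simp only [Finsupp.add_apply, Finsupp.single_apply, if_true] at hEl
    rw [if_neg hwℓ, if_neg hvℓ] at hEl
    by_cases haℓ : a = ℓ
    · subst haℓ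
      have hEv := DFunLike.congr_fun E v
      simp only [Finsupp.add_apply, Finsupp.single_apply, if_true] at hEv
      rw [if_neg (fun h : w = v => hvw h.symm), if_neg (fun h : a = v => hvℓ h.symm)] at hEv
      have hbv : b = v := by by_contra hc; rw [if_neg hc] at hEv; omega
      exact hbv ▸ hab
    · have hbℓ : b = ℓ := by by_contra hc; rw [if_neg haℓ, if_neg hc] at hEl; omega
      subst hbℓ
      have hEv := DFunLike.congr_fun E v
      simp only [Finsupp.add_apply, Finsupp.single_apply, if_true] at hEv
      rw [if_neg (fun h : w = v => hvw h.symm), if_neg (fun h : b = v => hvℓ h.symm)] at hEv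
      have hav : a = v := by by_contra hc; rw [if_neg hc] at hEv; omega
      exact (hav ▸ hab).symm
  · rw [X_mul_mono, X_mul_mono] at heq
    have E := mono_inj heq
    exfalso
    have hEm := DFunLike.congr_fun E m
    simp only [Finsupp.add_apply, Finsupp.single_apply, if_true] at hEm
    by_cases h1 : w = m
    · rw [if_pos h1] at hEm
      by_cases hℓm : ℓ = m
      · by_cases hvm : v = m
        · exact hvℓ (hvm.trans hℓm.symm)
        · rw [if_pos hℓm, if_neg hvm] at hEm; omega
      · rw [if_neg hℓm] at hEm
        by_cases hvm : v = m
        · rw [if_pos hvm] at hEm; omega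
        · rw [if_neg hvm] at hEm; omega
    · rw [if_neg h1] at hEm
      by_cases hℓm : ℓ = m
      · by_cases hvm : v = m
        · exact hvℓ (hvm.trans hℓm.symm)
        · rw [if_pos hℓm, if_neg hvm] at hEm; omega
      · rw [if_neg hℓm] at hEm
        by_cases hvm : v = m
        · rw [if_pos hvm] at hEm; omega
        · rw [if_neg hvm] at hEm; omega

lemma not_adj_trans
    (hpoly : ExchangeProperty
      (edgeGens K G ∪ {w | ∃ ℓ : Fin n, (ℓ : ℕ) < t ∧ w = X ℓ ^ 2}))
    (hvar : ∀ v : Fin n, ∃ u ∈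
      (edgeGens K G ∪ {w | ∃ ℓ : Fin n, (ℓ : ℕ) < t ∧ w = X ℓ ^ 2}),
      MvPolynomial.X v ∣ u)
    {a b c : Fin n} (hab : ¬G.Adj a b) (hbc : ¬G.Adj b c) : ¬G.Adj a c := by
  intro hac
  have hn : 2 ≤ n := two_le_of_ne hac.ne
  by_cases h1 : a = b
  · exact hbc (h1 ▸ hac)
  by_cases h2 : b = c
  · exact hab (by rw [h2]; exact hac)
  obtain ⟨w, hbw⟩ := exists_adj hpoly hvar hn b
  have hwa : w ≠ a := fun h => hab ((h ▸ hbw).symm)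
  have hwc : w ≠ c := fun h => hbc (h ▸ hbw)
  have hbw' : b ≠ w := hbw.ne
  obtain ⟨j, hdegj, w', hw', heq⟩ := hpoly _ (mem_gens0_edge hbw) _ (mem_gens0_edge hac) w (by
    rw [deg_mono, deg_mono, Finsupp.add_apply, Finsupp.add_apply, Finsupp.single_apply,
      Finsupp.single_apply, Finsupp.single_apply, Finsupp.single_apply,
      if_neg (fun h : a = w => hwa h.symm), if_neg (fun h : c = w => hwc h.symm), if_pos rfl]
    omega)
  rw [deg_mono, deg_mono, Finsupp.add_apply, Finsupp.add_apply, Finsupp.single_apply,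
    Finsupp.single_apply, Finsupp.single_apply, Finsupp.single_apply] at hdegj
  have hja_or : j = a ∨ j = c := by
    by_contra hcon
    push_neg at hcon
    rw [if_neg (fun h : a = j => hcon.1 h.symm), if_neg (fun h : c = j => hcon.2 h.symm)] at hdegj
    omega
  have hjb : j ≠ b := by rcases hja_or with rfl | rfl; exacts [h1, fun h => h2 h.symm]
  have hjw : j ≠ w := by
    rcases hja_or with rfl | rfl; exacts [fun h => hwa h.symm, fun h => hwc h.symm]
  rcases gens0_form hw' with ⟨p, q, hpq, rfl⟩ | ⟨m, hm, rfl⟩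
  · rw [X_mul_mono, X_mul_mono] at heq
    have E := mono_inj heq
    have hEb := DFunLike.congr_fun E b
    simp only [Finsupp.add_apply, Finsupp.single_apply, if_true] at hEb
    rw [if_neg (fun h : w = b => hbw' h.symm), if_neg (fun h : j = b => hjb h)] at hEb
    have hbj : G.Adj b j := by
      by_cases hpb : p = b
      · subst hpb
        have hEj := DFunLike.congr_fun E j
        simp only [Finsupp.add_apply, Finsupp.single_apply, if_true] at hEj
        rw [if_neg (fun h : w = j => hjw h.symm), if_neg (fun h : p = j => hjb h.symm)] at hEj
        have hqj : q = j := by by_contra hc; rw [if_neg hc] at hEj; omega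
        subst hqj
        exact hpq
      · have hqb : q = b := by by_contra hc; rw [if_neg hpb, if_neg hc] at hEb; omega
        subst hqb
        have hEj := DFunLike.congr_fun E j
        simp only [Finsupp.add_apply, Finsupp.single_apply, if_true] at hEj
        rw [if_neg (fun h : w = j => hjw h.symm), if_neg (fun h : q = j => hjb h.symm)] at hEj
        have hpj : p = j := by by_contra hc; rw [if_neg hc] at hEj; omega
        subst hpj
        exact hpq.symm
    rcases hja_or with rfl | rfl
    · exact hab hbj.symm
    · exact hbc hbj
  · rw [X_mul_mono, X_mul_mono] at heq
    have E := mono_inj heq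
    have hEm := DFunLike.congr_fun E m
    simp only [Finsupp.add_apply, Finsupp.single_apply, if_true] at hEm
    by_cases h3 : w = m
    · rw [if_pos h3] at hEm
      by_cases h4 : j = m
      · by_cases h5 : b = m
        · exact hjb (h4.trans h5.symm)
        · rw [if_pos h4, if_neg h5] at hEm; omega
      · rw [if_neg h4] at hEm
        by_cases h5 : b = m
        · rw [if_pos h5] at hEm; omega
        · rw [if_neg h5] at hEm; omega
    · rw [if_neg h3] at hEm
      by_cases h4 : j = m
      · by_cases h5 : b = m
        · exact hjb (h4.trans h5.symm)
        · rw [if_pos h4, if_neg h5] at hEm; omega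
      · rw [if_neg h4] at hEm
        by_cases h5 : b = m
        · rw [if_pos h5] at hEm; omega
        · rw [if_neg h5] at hEm; omega

variable {k : ℕ}

/-- Exponent-vector characterisation of the generators of `HS_k`. -/
def Good (G : SimpleGraph (Fin n)) (t k : ℕ) (c : Fin n →₀ ℕ) : Prop :=
  degsum c = k + 2 ∧ (∀ x, c x ≤ 2) ∧ (∀ x, c x = 2 → (x : ℕ) < t) ∧
    (∀ x y, c x = 2 → y ≠ x → c y ≤ 1) ∧ (∃ p q, G.Adj p q ∧ c p ≠ 0 ∧ c q ≠ 0)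

lemma ind_union {A B : Finset (Fin n)} (h : Disjoint A B) : ind (A ∪ B) = ind A + ind B := by
  rw [ind, ind, ind]; exact Finset.sum_union h

lemma good_of_mem (hF3 : ∀ ℓ : Fin n, (ℓ : ℕ) < t → ∀ v, v ≠ ℓ → G.Adj ℓ v) (hk : 1 ≤ k)
    {u : MvPolynomial (Fin n) K}
    (hu : u ∈ HSgens K G k ∪ {w : MvPolynomial (Fin n) K | ∃ ℓ : Fin n, (ℓ : ℕ) < t ∧
      ∃ A : Finset (Fin n), A.card = k ∧ ℓ ∉ A ∧
        w = MvPolynomial.X ℓ ^ 2 * ∏ a ∈ A, MvPolynomial.X a}) :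
    ∃ c, u = monomial c 1 ∧ Good G t k c := by
  classical
  rcases hu with ⟨A, B, hAne, hBne, hlt, hcard, ⟨a0, ha0A, ha0max, ha0adj⟩, rfl⟩ |
    ⟨ℓ, hℓ, A, hcard, hℓA, rfl⟩
  · have hdisj : Disjoint A B := by
      rw [Finset.disjoint_left]
      intro a haA haB
      exact absurd (hlt a haA a haB) (lt_irrefl a)
    obtain ⟨b0, hb0⟩ := hBne
    refine ⟨ind (A ∪ B), ?_, ?_, ?_, ?_, ?_, ?_⟩
    · rw [prod_X_eq, prod_X_eq, monomial_mul, mul_one, ind_union hdisj]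
    · rw [degsum_ind]; exact hcard
    · intro x; rw [ind_apply]; split_ifs <;> omega
    · intro x h2; exfalso; rw [ind_apply] at h2; split_ifs at h2 <;> omega
    · intro x y h2 _; exfalso; rw [ind_apply] at h2; split_ifs at h2 <;> omega
    · refine ⟨a0, b0, ha0adj b0 hb0, ?_, ?_⟩
      · rw [ind_apply, if_pos (Finset.mem_union_left _ ha0A)]; omega
      · rw [ind_apply, if_pos (Finset.mem_union_right _ hb0)]; omega
  · have happ : ∀ x, (Finsupp.single ℓ 2 + ind A : Fin n →₀ ℕ) x
        = (if ℓ = x then 2 else 0) + (if x ∈ A then 1 else 0) := by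
      intro x; rw [Finsupp.add_apply, Finsupp.single_apply, ind_apply]
    have hAne : A.Nonempty := Finset.card_pos.mp (by omega)
    obtain ⟨a, ha⟩ := hAne
    have haℓ : a ≠ ℓ := fun h => hℓA (h ▸ ha)
    refine ⟨Finsupp.single ℓ 2 + ind A, ?_, ?_, ?_, ?_, ?_, ?_⟩
    · rw [X_pow_eq_monomial, prod_X_eq, monomial_mul, mul_one]
    · rw [degsum_add, degsum_single, degsum_ind, hcard]; omega
    · intro x; rw [happ x]
      by_cases h1 : ℓ = x
      · rw [if_pos h1, if_neg (show x ∉ A by rw [← h1]; exact hℓA)]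
      · rw [if_neg h1]; split_ifs <;> omega
    · intro x h2x
      by_cases h1 : ℓ = x
      · rw [← h1]; exact hℓ
      · exfalso; rw [happ, if_neg h1] at h2x; split_ifs at h2x <;> omega
    · intro x y h2x hyx
      have hx : ℓ = x := by
        by_contra h1
        rw [happ, if_neg h1] at h2x; split_ifs at h2x <;> omega
      rw [happ, if_neg (show ℓ ≠ y from fun h => hyx ((hx.symm.trans h).symm))]
      split_ifs <;> omega
    · refine ⟨ℓ, a, hF3 ℓ hℓ a haℓ, ?_, ?_⟩
      · rw [happ, if_pos rfl, if_neg hℓA]; omega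
      · rw [happ, if_neg (fun h => haℓ h.symm), if_pos ha]; omega

lemma mem_of_good (hTr : ∀ a b c : Fin n, ¬G.Adj a b → ¬G.Adj b c → ¬G.Adj a c)
    {c : Fin n →₀ ℕ} (hc : Good G t k c) :
    (monomial c 1 : MvPolynomial (Fin n) K) ∈
      HSgens K G k ∪ {w : MvPolynomial (Fin n) K | ∃ ℓ : Fin n, (ℓ : ℕ) < t ∧
      ∃ A : Finset (Fin n), A.card = k ∧ ℓ ∉ A ∧
        w = MvPolynomial.X ℓ ^ 2 * ∏ a ∈ A, MvPolynomial.X a} := by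
  classical
  obtain ⟨hg1, hg2, hg3, hg4, p, q, hpq, hp, hq⟩ := hc
  by_cases hsq : ∃ ℓ, c ℓ = 2
  · obtain ⟨ℓ, hℓ2⟩ := hsq
    right
    set A := c.support.erase ℓ with hA
    have hℓA : ℓ ∉ A := Finset.notMem_erase _ _
    have hA1 : ∀ x ∈ A, c x = 1 := by
      intro x hx
      have hx1 : x ≠ ℓ := Finset.ne_of_mem_erase hx
      have hx2 : c x ≠ 0 := Finsupp.mem_support_iff.mp (Finset.mem_of_mem_erase hx)
      have := hg4 ℓ x hℓ2 hx1
      omega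
    have hceq : c = Finsupp.single ℓ 2 + ind A := by
      ext x
      rw [Finsupp.add_apply, Finsupp.single_apply, ind_apply]
      by_cases h1 : ℓ = x
      · rw [if_pos h1, if_neg (show x ∉ A by rw [← h1]; exact hℓA), ← h1, hℓ2]
      · rw [if_neg h1]
        by_cases h2 : x ∈ A
        · rw [if_pos h2, hA1 x h2]
        · have hx0 : c x = 0 := by
            by_contra hc0
            exact h2 (Finset.mem_erase.mpr ⟨fun h => h1 h.symm, Finsupp.mem_support_iff.mpr hc0⟩)
          rw [hx0, if_neg h2]
    have hcard : A.card = k := by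
      have h := hg1
      rw [hceq, degsum_add, degsum_single, degsum_ind] at h
      omega
    exact ⟨ℓ, hg3 ℓ hℓ2, A, hcard, hℓA,
      by rw [hceq, X_pow_eq_monomial, prod_X_eq, monomial_mul, mul_one]⟩
  · push_neg at hsq
    left
    have hle1 : ∀ x, c x ≤ 1 := fun x => by have := hg2 x; have := hsq x; omega
    set S := c.support with hS
    have hceq : c = ind S := by
      ext x; rw [ind_apply]
      by_cases h1 : x ∈ S
      · have h2 := Finsupp.mem_support_iff.mp h1
        have := hle1 x
        rw [if_pos h1]; omega
      · rw [if_neg h1]; exact Finsupp.notMem_support_iff.mp h1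
    have hScard : S.card = k + 2 := by
      rw [hceq, degsum_ind] at hg1; exact hg1
    have hpS : p ∈ S := Finsupp.mem_support_iff.mpr hp
    have hqS : q ∈ S := Finsupp.mem_support_iff.mpr hq
    have hSne : S.Nonempty := ⟨p, hpS⟩
    set M := S.max' hSne with hM
    have hMS : M ∈ S := S.max'_mem hSne
    set T := S.filter (fun y => G.Adj y M) with hT
    have hTne : T.Nonempty := by
      by_cases hpM : G.Adj p M
      · exact ⟨p, Finset.mem_filter.mpr ⟨hpS, hpM⟩⟩
      by_cases hqM : G.Adj q M
      · exact ⟨q, Finset.mem_filter.mpr ⟨hqS, hqM⟩⟩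
      · exact absurd hpq (hTr p M q hpM (fun h => hqM h.symm))
    set x0 := T.max' hTne with hx0
    have hx0T : x0 ∈ T := T.max'_mem hTne
    have hx0S : x0 ∈ S := (Finset.mem_filter.mp hx0T).1
    have hx0M : G.Adj x0 M := (Finset.mem_filter.mp hx0T).2
    have hx0ltM : x0 < M := lt_of_le_of_ne (S.le_max' x0 hx0S) hx0M.ne
    set A := S.filter (fun y => y ≤ x0) with hAdef
    set B := S.filter (fun y => ¬ y ≤ x0) with hBdef
    have hAB : A ∪ B = S := Finset.filter_union_filter_not_eq _ S
    have hdisj : Disjoint A B := Finset.disjoint_filter_filter_not S S _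
    refine ⟨A, B, ⟨x0, Finset.mem_filter.mpr ⟨hx0S, le_refl _⟩⟩,
      ⟨M, Finset.mem_filter.mpr ⟨hMS, not_le.mpr hx0ltM⟩⟩, ?_, ?_,
      ⟨x0, Finset.mem_filter.mpr ⟨hx0S, le_refl _⟩, ?_, ?_⟩, ?_⟩
    · intro a ha b hb
      exact lt_of_le_of_lt (Finset.mem_filter.mp ha).2 (not_le.mp (Finset.mem_filter.mp hb).2)
    · rw [hAB]; exact hScard
    · intro a ha; exact (Finset.mem_filter.mp ha).2
    · intro b hb
      obtain ⟨hbS, hbgt⟩ := Finset.mem_filter.mp hb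
      replace hbgt := not_le.mp hbgt
      by_contra hadj
      have hbM : ¬G.Adj b M := by
        intro h
        exact absurd (T.le_max' b (Finset.mem_filter.mpr ⟨hbS, h⟩)) (not_le.mpr hbgt)
      exact absurd hx0M (hTr x0 b M hadj hbM)
    · rw [hceq, ← hAB, prod_X_eq, prod_X_eq, monomial_mul, mul_one, ind_union hdisj]

lemma e_at_j' {c : Fin n →₀ ℕ} {i j : Fin n} (hij : i ≠ j) :
    (c + Finsupp.single j 1 - Finsupp.single i 1 : Fin n →₀ ℕ) j = c j + 1 := by
  rw [e_at, if_pos rfl, if_neg hij]; omega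

lemma e_at_i' {c : Fin n →₀ ℕ} {i j : Fin n} (hji : j ≠ i) :
    (c + Finsupp.single j 1 - Finsupp.single i 1 : Fin n →₀ ℕ) i = c i - 1 := by
  rw [e_at, if_neg hji, if_pos rfl]; omega

lemma e_at_o {c : Fin n →₀ ℕ} {i j x : Fin n} (h1 : j ≠ x) (h2 : i ≠ x) :
    (c + Finsupp.single j 1 - Finsupp.single i 1 : Fin n →₀ ℕ) x = c x := by
  rw [e_at, if_neg h1, if_neg h2]; omega

lemma exists_lt {c d : Fin n →₀ ℕ} (hc1 : degsum c = k + 2) (hd1 : degsum d = k + 2)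
    {i : Fin n} (hi : d i < c i) : ∃ j, c j < d j := by
  classical
  by_contra hcon
  push_neg at hcon
  have h1 : degsum c = ∑ x ∈ c.support ∪ d.support, c x :=
    degsum_eq _ Finset.subset_union_left
  have h2 : degsum d = ∑ x ∈ c.support ∪ d.support, d x :=
    degsum_eq _ Finset.subset_union_right
  have hiU : i ∈ c.support ∪ d.support :=
    Finset.mem_union_left _ (Finsupp.mem_support_iff.mpr (by omega))
  have hlt : ∑ x ∈ c.support ∪ d.support, d x < ∑ x ∈ c.support ∪ d.support, c x :=
    Finset.sum_lt_sum (fun x _ => hcon x) ⟨i, hiU, hi⟩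
  omega

lemma exists_zero {c d : Fin n →₀ ℕ} (hc : Good G t k c) (hd : Good G t k d)
    {i ℓ : Fin n} (hi : d i < c i) (hℓi : ℓ ≠ i) (hℓ2 : c ℓ = 2) :
    ∃ j, c j < d j ∧ c j = 0 := by
  classical
  obtain ⟨hc1, hc2, hc3, hc4, -⟩ := hc
  obtain ⟨hd1, hd2, hd3, hd4, -⟩ := hd
  by_contra hcon
  push_neg at hcon
  obtain ⟨j₀, hj₀⟩ := exists_lt hc1 hd1 hi
  have hcj₀ : c j₀ = 1 := by have := hcon j₀ hj₀; have := hd2 j₀; omega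
  have hdj₀ : d j₀ = 2 := by have := hd2 j₀; omega
  have hℓj₀ : ℓ ≠ j₀ := fun h => by rw [h] at hℓ2; omega
  have hij₀ : i ≠ j₀ := fun h => by rw [h] at hi; omega
  have hdℓ : d ℓ ≤ 1 := by
    by_contra hdc
    push_neg at hdc
    have hd2ℓ : d ℓ = 2 := by have := hd2 ℓ; omega
    have := hd4 ℓ j₀ hd2ℓ (Ne.symm hℓj₀)
    omega
  have hDuniq : ∀ x, c x < d x → x = j₀ := by
    intro x hx
    by_contra hxx
    have hdx : d x = 2 := by have := hcon x hx; have := hd2 x; omega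
    have := hd4 x j₀ hdx (Ne.symm hxx)
    omega
  set U := c.support ∪ d.support with hU
  have hiU : i ∈ U := Finset.mem_union_left _ (Finsupp.mem_support_iff.mpr (by omega))
  have hℓU : ℓ ∈ U := Finset.mem_union_left _ (Finsupp.mem_support_iff.mpr (by omega))
  have hj₀U : j₀ ∈ U := Finset.mem_union_right _ (Finsupp.mem_support_iff.mpr (by omega))
  have hptw : ∀ x ∈ U, d x + ((if x = i then 1 else 0) + (if x = ℓ then 1 else 0))
      ≤ c x + (if x = j₀ then 1 else 0) := by
    intro x _
    by_cases h1 : x = i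
    · subst h1
      rw [if_pos rfl, if_neg (fun h : x = ℓ => hℓi h.symm), if_neg hij₀]
      omega
    · rw [if_neg h1]
      by_cases h2 : x = ℓ
      · subst h2
        rw [if_pos rfl, if_neg hℓj₀]
        omega
      · rw [if_neg h2]
        by_cases h3 : x = j₀
        · subst h3
          rw [if_pos rfl]
          omega
        · rw [if_neg h3]
          have : ¬ (c x < d x) := fun hlt => h3 (hDuniq x hlt)
          omega
  have hsum := Finset.sum_le_sum hptw
  have e1 : ∑ x ∈ U, (if x = i then (1:ℕ) else 0) = 1 := by
    rw [Finset.sum_ite_eq' U i (fun _ => (1:ℕ)), if_pos hiU]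
  have e2 : ∑ x ∈ U, (if x = ℓ then (1:ℕ) else 0) = 1 := by
    rw [Finset.sum_ite_eq' U ℓ (fun _ => (1:ℕ)), if_pos hℓU]
  have e3 : ∑ x ∈ U, (if x = j₀ then (1:ℕ) else 0) = 1 := by
    rw [Finset.sum_ite_eq' U j₀ (fun _ => (1:ℕ)), if_pos hj₀U]
  rw [Finset.sum_add_distrib, Finset.sum_add_distrib, e1, e2,
    Finset.sum_add_distrib, e3] at hsum
  have g1 : degsum c = ∑ x ∈ U, c x := degsum_eq _ Finset.subset_union_left
  have g2 : degsum d = ∑ x ∈ U, d x := degsum_eq _ Finset.subset_union_right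
  omega

lemma g2_E {c d : Fin n →₀ ℕ} (hc2 : ∀ x, c x ≤ 2) (hd2 : ∀ x, d x ≤ 2) {i j : Fin n}
    (hj : c j < d j) :
    ∀ x, (c + Finsupp.single j 1 - Finsupp.single i 1 : Fin n →₀ ℕ) x ≤ 2 := by
  intro x
  rw [e_at]
  have h1 := hc2 x
  have h2 := hd2 x
  by_cases hjx : j = x
  · have h3 : c x < d x := hjx ▸ hj
    rw [if_pos hjx]
    split_ifs <;> omega
  · rw [if_neg hjx]
    split_ifs <;> omega

lemma g3_E {c d : Fin n →₀ ℕ} (hc2 : ∀ x, c x ≤ 2) (hc3 : ∀ x, c x = 2 → (x:ℕ) < t)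
    (hd2 : ∀ x, d x ≤ 2) (hd3 : ∀ x, d x = 2 → (x:ℕ) < t) {i j : Fin n}
    (hj : c j < d j) (hi : d i < c i) :
    ∀ x, (c + Finsupp.single j 1 - Finsupp.single i 1 : Fin n →₀ ℕ) x = 2 → (x:ℕ) < t := by
  intro x hx
  rw [e_at] at hx
  by_cases h1 : j = x
  · by_cases h2 : i = x
    · exfalso
      have := h1 ▸ hj
      have := h2 ▸ hi
      omega
    · rw [if_pos h1, if_neg h2] at hx
      have h3 : c x < d x := h1 ▸ hj
      have := hd2 x
      exact hd3 x (by omega)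
  · rw [if_neg h1] at hx
    by_cases h2 : i = x
    · exfalso
      rw [if_pos h2] at hx
      have := hc2 x
      omega
    · rw [if_neg h2] at hx
      exact hc3 x (by omega)

lemma exchange_good (hF3 : ∀ ℓ : Fin n, (ℓ : ℕ) < t → ∀ v, v ≠ ℓ → G.Adj ℓ v)
    (hTr : ∀ a b c : Fin n, ¬G.Adj a b → ¬G.Adj b c → ¬G.Adj a c)
    {c d : Fin n →₀ ℕ} (hc : Good G t k c) (hd : Good G t k d) {i : Fin n}
    (hi : d i < c i) :
    ∃ j, c j < d j ∧ Good G t k (c + Finsupp.single j 1 - Finsupp.single i 1) := by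
  classical
  have hg1E : ∀ j : Fin n,
      degsum (c + Finsupp.single j 1 - Finsupp.single i 1 : Fin n →₀ ℕ) = k + 2 := by
    intro j
    have hle : (Finsupp.single i 1 : Fin n →₀ ℕ) ≤ c + Finsupp.single j 1 := by
      rw [Finsupp.le_def]
      intro x
      rw [Finsupp.single_apply, Finsupp.add_apply]
      by_cases h : i = x
      · rw [if_pos h, ← h]
        omega
      · rw [if_neg h]
        omega
    have hkey := tsub_add_cancel_of_le hle
    have h2 := congrArg degsum hkey
    rw [degsum_add, degsum_add, degsum_single, degsum_single] at h2
    have := hc.1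
    omega
  by_cases hci2 : c i = 2
  -- Case I : c i = 2
  · obtain ⟨j, hj⟩ := exists_lt hc.1 hd.1 hi
    have hji : j ≠ i := fun h => by rw [h] at hj; omega
    have hij : i ≠ j := fun h => hji h.symm
    refine ⟨j, hj, hg1E j, g2_E hc.2.1 hd.2.1 hj, g3_E hc.2.1 hc.2.2.1 hd.2.1 hd.2.2.1 hj hi,
      ?_, ?_⟩
    · intro x y h2x hyx
      have hxj : x = j := by
        by_contra hxj
        by_cases hxi : x = i
        · rw [hxi, e_at_i' hji] at h2x; omega
        · rw [e_at_o (fun h => hxj h.symm) (fun h => hxi h.symm)] at h2x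
          have := hc.2.2.2.1 i x hci2 hxi
          omega
      subst hxj
      by_cases hyi : y = i
      · rw [hyi, e_at_i' hji]; omega
      · rw [e_at_o (fun h => hyx h.symm) (fun h => hyi h.symm)]
        exact hc.2.2.2.1 i y hci2 hyi
    · obtain ⟨p, q, hpq, hp, hq⟩ := hc.2.2.2.2
      have key : ∀ x, c x ≠ 0 →
          (c + Finsupp.single j 1 - Finsupp.single i 1 : Fin n →₀ ℕ) x ≠ 0 := by
        intro x hx
        by_cases h1 : x = j
        · rw [h1, e_at_j' hij]; omega
        by_cases h2 : x = i
        · rw [h2, e_at_i' hji]; omega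
        · rw [e_at_o (fun h => h1 h.symm) (fun h => h2 h.symm)]; exact hx
      exact ⟨p, q, hpq, key p hp, key q hq⟩
  -- Case II : c i = 1
  · have hci1 : c i = 1 := by have := hc.2.1 i; omega
    by_cases hsq : ∃ ℓ, ℓ ≠ i ∧ c ℓ = 2
    -- Case IIa : a square away from i
    · obtain ⟨ℓ, hℓi, hℓ2⟩ := hsq
      obtain ⟨j, hj, hj0⟩ := exists_zero ⟨hc.1, hc.2.1, hc.2.2.1, hc.2.2.2.1, hc.2.2.2.2⟩
        ⟨hd.1, hd.2.1, hd.2.2.1, hd.2.2.2.1, hd.2.2.2.2⟩ hi hℓi hℓ2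
      have hji : j ≠ i := fun h => by rw [h] at hj0; omega
      have hij : i ≠ j := fun h => hji h.symm
      have hjℓ : j ≠ ℓ := fun h => by rw [h] at hj0; omega
      refine ⟨j, hj, hg1E j, g2_E hc.2.1 hd.2.1 hj, g3_E hc.2.1 hc.2.2.1 hd.2.1 hd.2.2.1 hj hi,
        ?_, ?_⟩
      · intro x y h2x hyx
        have hxℓ : x = ℓ := by
          by_contra hxℓ
          by_cases hxj : x = j
          · rw [hxj, e_at_j' hij] at h2x; omega
          by_cases hxi : x = i
          · rw [hxi, e_at_i' hji] at h2x; omega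
          · rw [e_at_o (fun h => hxj h.symm) (fun h => hxi h.symm)] at h2x
            have := hc.2.2.2.1 x ℓ h2x (fun h => hxℓ h.symm)
            omega
        subst hxℓ
        by_cases hyi : y = i
        · rw [hyi, e_at_i' hji]; omega
        by_cases hyj : y = j
        · rw [hyj, e_at_j' hij]; omega
        · rw [e_at_o (fun h => hyj h.symm) (fun h => hyi h.symm)]
          exact hc.2.2.2.1 x y hℓ2 hyx
      · refine ⟨ℓ, j, hF3 ℓ (hc.2.2.1 ℓ hℓ2) j hjℓ, ?_, ?_⟩
        · rw [e_at_o hjℓ (fun h => hℓi h.symm)]; omega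
        · rw [e_at_j' hij]; omega
    -- Case IIb : c squarefree
    · push_neg at hsq
      have hle1 : ∀ x, c x ≤ 1 := by
        intro x
        by_cases hxi : x = i
        · rw [hxi]; omega
        · have := hsq x hxi; have := hc.2.1 x; omega
      by_cases halpha : ∃ p q, p ≠ i ∧ q ≠ i ∧ G.Adj p q ∧ c p ≠ 0 ∧ c q ≠ 0
      -- Case IIb-alpha
      · obtain ⟨p, q, hpi, hqi, hpq, hp, hq⟩ := halpha
        obtain ⟨j, hj⟩ := exists_lt hc.1 hd.1 hi
        have hji : j ≠ i := fun h => by rw [h] at hj; omega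
        have hij : i ≠ j := fun h => hji h.symm
        refine ⟨j, hj, hg1E j, g2_E hc.2.1 hd.2.1 hj,
          g3_E hc.2.1 hc.2.2.1 hd.2.1 hd.2.2.1 hj hi, ?_, ?_⟩
        · intro x y h2x hyx
          have hxj : x = j := by
            by_contra hxj
            by_cases hxi : x = i
            · rw [hxi, e_at_i' hji] at h2x; omega
            · rw [e_at_o (fun h => hxj h.symm) (fun h => hxi h.symm)] at h2x
              have := hle1 x; omega
          subst hxj
          by_cases hyi : y = i
          · rw [hyi, e_at_i' hji]; omega
          · rw [e_at_o (fun h => hyx h.symm) (fun h => hyi h.symm)]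
            exact hle1 y
        · have key : ∀ x, x ≠ i → c x ≠ 0 →
              (c + Finsupp.single j 1 - Finsupp.single i 1 : Fin n →₀ ℕ) x ≠ 0 := by
            intro x hxi hx
            by_cases h1 : x = j
            · rw [h1, e_at_j' hij]; omega
            · rw [e_at_o (fun h => h1 h.symm) (fun h => hxi h.symm)]; exact hx
          exact ⟨p, q, hpq, key p hpi hp, key q hqi hq⟩
      -- Case IIb-beta
      · push_neg at halpha
        obtain ⟨p, q, hpq, hp, hq⟩ := hc.2.2.2.2
        have hz : ∃ z, G.Adj i z ∧ c z ≠ 0 := by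
          by_cases hpi : p = i
          · exact ⟨q, hpi ▸ hpq, hq⟩
          by_cases hqi : q = i
          · exact ⟨p, (hqi ▸ hpq).symm, hp⟩
          · exact absurd (halpha p q hpi hqi hpq hp) hq
        obtain ⟨z, hiz, hz0⟩ := hz
        have hzi : z ≠ i := hiz.ne'
        have hdi0 : d i = 0 := by omega
        have hexj : ∃ j, c j < d j ∧ G.Adj j z := by
          by_contra hcon
          push_neg at hcon
          have hsupd : ∀ x, d x ≠ 0 → ¬G.Adj x z := by
            intro x hx
            by_cases hcd : c x < d x
            · exact hcon x hcd
            · have hxi : x ≠ i := fun h => hx (by rw [h]; exact hdi0)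
              intro hadj
              exact hz0 (halpha x z hxi hzi hadj (by omega))
          obtain ⟨p', q', hpq', hp', hq'⟩ := hd.2.2.2.2
          exact absurd hpq' (hTr p' z q' (hsupd p' hp') (fun h => (hsupd q' hq') h.symm))
        obtain ⟨j, hj, hjz⟩ := hexj
        have hji : j ≠ i := fun h => by rw [h] at hj; omega
        have hij : i ≠ j := fun h => hji h.symm
        have hjz' : j ≠ z := hjz.ne
        refine ⟨j, hj, hg1E j, g2_E hc.2.1 hd.2.1 hj,
          g3_E hc.2.1 hc.2.2.1 hd.2.1 hd.2.2.1 hj hi, ?_, ?_⟩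
        · intro x y h2x hyx
          have hxj : x = j := by
            by_contra hxj
            by_cases hxi : x = i
            · rw [hxi, e_at_i' hji] at h2x; omega
            · rw [e_at_o (fun h => hxj h.symm) (fun h => hxi h.symm)] at h2x
              have := hle1 x; omega
          subst hxj
          by_cases hyi : y = i
          · rw [hyi, e_at_i' hji]; omega
          · rw [e_at_o (fun h => hyx h.symm) (fun h => hyi h.symm)]
            exact hle1 y
        · refine ⟨j, z, hjz, ?_, ?_⟩
          · rw [e_at_j' hij]; omega
          · rw [e_at_o hjz' (fun h => hzi h.symm)]; exact hz0

end HSFH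

/-- **Theorem 4.6 (Ficarra–Herzog), key step.**  Let `I ⊆ K[x_1,…,x_n]` be a
polymatroidal ideal generated in degree `2` such that every variable divides a minimal
generator of `I` and `I` is not squarefree.  After relabelling,
`G(I) = {x_i x_j : {i,j} ∈ E(G)} ∪ {x_ℓ² : ℓ < t}` with `1 ≤ t ≤ n`, where `I(G)` is the
squarefree part `J` of `I`.  Then for all `k ≥ 1` the ideal
`HS_k(I) = HS_k(I(G)) + ∑_{ℓ<t} x_ℓ² · V_{k,ℓ}`, where `V_{k,ℓ}` is generated by the
squarefree monomials of degree `k` in the variables `x_j`, `j ≠ ℓ`, is a polymatroidal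
ideal generated in degree `k + 2`. -/


theorem HS_k_polymatroidal_of_polymatroidal_degree_two
    {K : Type*} [Field K] {n : ℕ} (G : SimpleGraph (Fin n)) (t : ℕ)
    (ht1 : 1 ≤ t) (ht2 : t ≤ n)
    (hpoly : ExchangeProperty
      (edgeGens K G ∪ {w | ∃ ℓ : Fin n, (ℓ : ℕ) < t ∧ w = MvPolynomial.X ℓ ^ 2}))
    (hvar : ∀ v : Fin n, ∃ u ∈
      (edgeGens K G ∪ {w | ∃ ℓ : Fin n, (ℓ : ℕ) < t ∧ w = MvPolynomial.X ℓ ^ 2}),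
      MvPolynomial.X v ∣ u) :
    ∀ k : ℕ, 1 ≤ k →
      IsPolymatroidal
        (Ideal.span (HSgens K G k) +
          Ideal.span {w : MvPolynomial (Fin n) K | ∃ ℓ : Fin n, (ℓ : ℕ) < t ∧
            ∃ A : Finset (Fin n), A.card = k ∧ ℓ ∉ A ∧
              w = MvPolynomial.X ℓ ^ 2 * ∏ a ∈ A, MvPolynomial.X a})
        (k + 2) := by
  intro k hk
  classical
  have hF3 : ∀ ℓ : Fin n, (ℓ : ℕ) < t → ∀ v, v ≠ ℓ → G.Adj ℓ v :=
    fun ℓ hℓ v hv => HSFH.adj_of_lt hpoly hvar hℓ hv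
  have hTr : ∀ a b c : Fin n, ¬G.Adj a b → ¬G.Adj b c → ¬G.Adj a c :=
    fun a b c => HSFH.not_adj_trans hpoly hvar
  refine ⟨HSgens K G k ∪ {w : MvPolynomial (Fin n) K | ∃ ℓ : Fin n, (ℓ : ℕ) < t ∧
      ∃ A : Finset (Fin n), A.card = k ∧ ℓ ∉ A ∧
        w = MvPolynomial.X ℓ ^ 2 * ∏ a ∈ A, MvPolynomial.X a}, ?_, ?_, ?_⟩
  · intro u hu
    obtain ⟨c, rfl, hc⟩ := HSFH.good_of_mem hF3 hk hu
    refine ⟨⟨c, rfl⟩, ?_⟩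
    rw [totalDegree_monomial _ one_ne_zero]
    exact hc.1
  · rw [Ideal.span_union, Submodule.add_eq_sup]
  · intro u hu v hv i hlt
    obtain ⟨cu, hueq, hcu⟩ := HSFH.good_of_mem hF3 hk hu
    obtain ⟨cv, hveq, hcv⟩ := HSFH.good_of_mem hF3 hk hv
    subst hueq
    subst hveq
    rw [HSFH.deg_mono, HSFH.deg_mono] at hlt
    obtain ⟨j, hjlt, hgood⟩ := HSFH.exchange_good hF3 hTr hcu hcv hlt
    refine ⟨j, ?_, monomial (cu + Finsupp.single j 1 - Finsupp.single i 1) 1,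
      HSFH.mem_of_good hTr hgood, ?_⟩
    · rw [HSFH.deg_mono, HSFH.deg_mono]
      exact hjlt
    · rw [HSFH.X_mul_mono, HSFH.X_mul_mono]
      congr 1
      congr 1
      have hle : (Finsupp.single i 1 : Fin n →₀ ℕ) ≤ cu + Finsupp.single j 1 := by
        rw [Finsupp.le_def]
        intro x
        rw [Finsupp.single_apply, Finsupp.add_apply]
        by_cases h : i = x
        · rw [if_pos h, ← h]
          omega
        · rw [if_neg h]
          omega
      have hkey := tsub_add_cancel_of_le hle
      calc Finsupp.single i 1 + (cu + Finsupp.single j 1 - Finsupp.single i 1)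
          = (cu + Finsupp.single j 1 - Finsupp.single i 1) + Finsupp.single i 1 :=
            add_comm _ _
        _ = cu + Finsupp.single j 1 := hkey
        _ = Finsupp.single j 1 + cu := add_comm _ _
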